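/- For all i and every point (x,v): Ǔ_i(x, L(x,v)) = U_i(x,v); that is, the p-representation covector Ǔ_i = Q_i + Σ_s (∇_i V^s) p_s composed with λ equals the v-representation covector U_i = Σ_q v^q ∇_q L_i − Σ_q L^q ∇_i L_q + F_i. -/

import Mathlib

/- Coordinate formalization of extended tensor fields in v- and p-representation
   for a generalized Legendre transformation λ(x,v) = (x, L(x,v)). -/

noncomputable section

open scoped BigOperators

/-- A point of the (co)tangent bundle in a single chart: a pair (x, v) or (x, p). -/
abbrev Pt (n : ℕ) := (Fin n → ℝ) × (Fin n → ℝ)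

/-- An indexed family of scalar functions (components of a (co)vector field). -/
abbrev Fam (n : ℕ) := Fin n → Pt n → ℝ

/-- Components Γ^k_{ij} of an extended connection (or of a gauge tensor T^k_{ij}). -/
abbrev Conn (n : ℕ) := Fin n → Fin n → Fin n → Pt n → ℝ

variable {n : ℕ}

/-- Kronecker delta δ^i_j. -/
def kron (i j : Fin n) : ℝ := if i = j then 1 else 0

/-- Partial derivative ∂f/∂x^m (first slot). -/
def pdx (m : Fin n) (f : Pt n → ℝ) (q : Pt n) : ℝ :=
  fderiv ℝ f q (Pi.single m 1, 0)

/-- Partial derivative ∂f/∂v^m (resp. ∂f/∂p_m): second slot. -/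
def pdv (m : Fin n) (f : Pt n → ℝ) (q : Pt n) : ℝ :=
  fderiv ℝ f q (0, Pi.single m 1)

/-- The generalized Legendre transformation λ(x,v) = (x, L(x,v)). -/
def lam (L : Fam n) (q : Pt n) : Pt n := (q.1, fun i => L i q)

/-- The inverse map λ⁻¹(x,p) = (x, V(x,p)). -/
def lamInv (V : Fam n) (q : Pt n) : Pt n := (q.1, fun i => V i q)

/-- g_{rk} = ∂L_r/∂v^k. -/
def gdn (L : Fam n) (r k : Fin n) (q : Pt n) : ℝ := pdv k (L r) q

/-- L^i = Σ_q L_q g^{qi}. -/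
def Lup (L : Fam n) (ginv : Fin n → Fin n → Pt n → ℝ) (i : Fin n) (q : Pt n) : ℝ :=
  ∑ j, L j q * ginv j i q

/-- |L|² = Σ_s L_s L^s. -/
def L2 (L : Fam n) (ginv : Fin n → Fin n → Pt n → ℝ) (q : Pt n) : ℝ :=
  ∑ s, L s q * Lup L ginv s q

/-- p-representation: W^i = Σ_s p_s ∂V^s/∂p_i. -/
def Wp (V : Fam n) (i : Fin n) (q : Pt n) : ℝ :=
  ∑ s, q.2 s * pdv i (V s) q

/-- p-representation: Ω = Σ_s p_s W^s. -/
def Omga (V : Fam n) (q : Pt n) : ℝ := ∑ s, q.2 s * Wp V s q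

/-- p-representation projector P̌^i_j = δ^i_j − W^i p_j / Ω. -/
def Pp (V : Fam n) (i j : Fin n) (q : Pt n) : ℝ :=
  kron i j - Wp V i q * q.2 j / Omga V q

/-- v-representation projector P^i_j = δ^i_j − L^i L_j / |L|². -/
def Pv (L : Fam n) (ginv : Fin n → Fin n → Pt n → ℝ) (i j : Fin n) (q : Pt n) : ℝ :=
  kron i j - Lup L ginv i q * L j q / L2 L ginv q

/-- Scalar part of the v-representation horizontal covariant derivative:
    ∂f/∂x^m − Σ_{a,b} v^a Γ^b_{am} ∂f/∂v^b. -/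
def vS (Γ : Conn n) (m : Fin n) (f : Pt n → ℝ) (q : Pt n) : ℝ :=
  pdx m f q - ∑ a, ∑ b, q.2 a * Γ b a m q * pdv b f q

/-- v-representation ∇_m X_j of a covector field. -/
def vCov (Γ : Conn n) (m : Fin n) (X : Fam n) (j : Fin n) (q : Pt n) : ℝ :=
  vS Γ m (X j) q - ∑ b, Γ b m j q * X b q

/-- v-representation ∇_m X^i of a vector field. -/
def vVec (Γ : Conn n) (m : Fin n) (X : Fam n) (i : Fin n) (q : Pt n) : ℝ :=
  vS Γ m (X i) q + ∑ a, Γ i m a q * X a q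

/-- v-representation ∇_k Y_{m r} of a (0,2) tensor field. -/
def vCov2 (Γ : Conn n) (k : Fin n) (Y : Fin n → Fin n → Pt n → ℝ)
    (m r : Fin n) (q : Pt n) : ℝ :=
  vS Γ k (Y m r) q - (∑ b, Γ b k m q * Y b r q) - (∑ b, Γ b k r q * Y m b q)

/-- v-representation ∇_m T^k_{ij} of a (1,2) tensor field. -/
def vT12 (Γ : Conn n) (m : Fin n) (T : Conn n) (k i j : Fin n) (q : Pt n) : ℝ :=
  vS Γ m (T k i j) q + (∑ a, Γ k m a q * T a i j q)
    - (∑ b, Γ b m i q * T k b j q) - (∑ b, Γ b m j q * T k i b q)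

/-- Connection components in p-representation: Γ^k_{ij} ∘ λ⁻¹. -/
def Gp (Γ : Conn n) (V : Fam n) (k i j : Fin n) (q : Pt n) : ℝ :=
  Γ k i j (lamInv V q)

/-- Scalar part of the p-representation horizontal covariant derivative:
    ∂f/∂x^m + Σ_{a,b} p_a Γ^a_{mb} ∂f/∂p_b. -/
def pS (G : Conn n) (m : Fin n) (f : Pt n → ℝ) (q : Pt n) : ℝ :=
  pdx m f q + ∑ a, ∑ b, q.2 a * G a m b q * pdv b f q

/-- p-representation ∇_m X_j of a covector field. -/
def pCov (G : Conn n) (m : Fin n) (X : Fam n) (j : Fin n) (q : Pt n) : ℝ :=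
  pS G m (X j) q - ∑ b, G b m j q * X b q

/-- p-representation ∇_m X^i of a vector field. -/
def pVec (G : Conn n) (m : Fin n) (X : Fam n) (i : Fin n) (q : Pt n) : ℝ :=
  pS G m (X i) q + ∑ a, G i m a q * X a q

/-- Force vector F^i = Φ^i + Σ_{j,k} Γ^i_{jk} v^j v^k. -/
def Fvec (Γ : Conn n) (Φ : Fam n) (i : Fin n) (q : Pt n) : ℝ :=
  Φ i q + ∑ j, ∑ k, Γ i j k q * q.2 j * q.2 k

/-- Force covector F_q = Σ_i g_{qi} F^i. -/
def Fcov (L : Fam n) (Γ : Conn n) (Φ : Fam n) (i : Fin n) (q : Pt n) : ℝ :=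
  ∑ j, gdn L i j q * Fvec Γ Φ j q

/-- p-representation force covector Q_i = Θ_i − Σ_{j,k} Γ^k_{ij} V^j p_k. -/
def Qp (Θ : Fam n) (Γ : Conn n) (V : Fam n) (i : Fin n) (q : Pt n) : ℝ :=
  Θ i q - ∑ j, ∑ k, Gp Γ V k i j q * V j q * q.2 k

/-- p-representation covector Ǔ_i = Q_i + Σ_s (∇_i V^s) p_s. -/
def Ucheck (Θ : Fam n) (Γ : Conn n) (V : Fam n) (i : Fin n) (q : Pt n) : ℝ :=
  Qp Θ Γ V i q + ∑ s, pVec (Gp Γ V) i V s q * q.2 s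

/-- v-representation covector U_i = Σ_q v^q ∇_q L_i − Σ_q L^q ∇_i L_q + F_i. -/
def Uv (L : Fam n) (ginv : Fin n → Fin n → Pt n → ℝ) (Γ : Conn n) (Φ : Fam n)
    (i : Fin n) (q : Pt n) : ℝ :=
  (∑ j, q.2 j * vCov Γ j L i q) - (∑ j, Lup L ginv j q * vCov Γ i L j q) + Fcov L Γ Φ i q

/-- v-representation dynamic curvature tensor D^k_{rij} = −∂Γ^k_{ir}/∂v^j. -/
def Dv (Γ : Conn n) (k r i j : Fin n) (q : Pt n) : ℝ := -(pdv j (Γ k i r) q)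

/-- v-representation curvature tensor R^k_{rij}. -/
def Rv (Γ : Conn n) (k r i j : Fin n) (q : Pt n) : ℝ :=
  pdx i (Γ k j r) q - pdx j (Γ k i r) q
  + (∑ m, (Γ k i m q * Γ m j r q - Γ k j m q * Γ m i r q))
  - (∑ m, ∑ s, q.2 s * Γ m i s q * pdv m (Γ k j r) q)
  + (∑ m, ∑ s, q.2 s * Γ m j s q * pdv m (Γ k i r) q)

/-- p-representation dynamic curvature tensor Ď^{kr}_{ij} = −∂Γ^k_{ij}/∂p_r. -/
def Dp (G : Conn n) (k r i j : Fin n) (q : Pt n) : ℝ := -(pdv r (G k i j) q)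

/-- p-representation curvature tensor Ř^k_{rij}. -/
def Rp (G : Conn n) (k r i j : Fin n) (q : Pt n) : ℝ :=
  pdx i (G k j r) q - pdx j (G k i r) q
  + (∑ m, (G k i m q * G m j r q - G k j m q * G m i r q))
  + (∑ m, ∑ s, q.2 s * G s m i q * pdv m (G k j r) q)
  - (∑ m, ∑ s, q.2 s * G s m j q * pdv m (G k i r) q)

/-- p-representation vector field α̌^k. -/
def alphaCheck (Θ : Fam n) (Γ : Conn n) (V : Fam n) (k : Fin n) (q : Pt n) : ℝ :=
  (∑ r, pdv k (V r) q * Ucheck Θ Γ V r q)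
  + (∑ r, pVec (Gp Γ V) r (Wp V) k q * V r q)
  + (∑ r, pdv r (Wp V k) q * Qp Θ Γ V r q)
  + (∑ r, Wp V r q * pdv k (Qp Θ Γ V r) q)
  - (∑ r, ∑ s, ∑ j, q.2 s * Dp (Gp Γ V) s k r j q * Wp V r q * V j q)

/-- v-representation vector field α^k. -/
def alphaV (L : Fam n) (ginv : Fin n → Fin n → Pt n → ℝ) (Γ : Conn n) (Φ : Fam n)
    (k : Fin n) (q : Pt n) : ℝ :=
  (∑ r, ginv r k q * Uv L ginv Γ Φ r q)
  + (∑ r, q.2 r * vVec Γ r (Lup L ginv) k q)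
  + (∑ j, Fvec Γ Φ j q * pdv j (Lup L ginv k) q)
  + (∑ j, ∑ r, ∑ s, Lup L ginv r q * ginv j k q * q.2 s * pdv j (vCov Γ s L r) q)
  + (∑ j, ∑ r, Lup L ginv r q * ginv j k q * pdv j (Fcov L Γ Φ r) q)
  + (∑ j, ∑ r, Lup L ginv r q * ginv j k q * vCov Γ j L r q)
  - (∑ j, ∑ m, ∑ r, ∑ s, ginv m k q * L s q * Dv Γ s r j m q * Lup L ginv r q * q.2 j)

/-- p-representation covector field β̌_k. -/
def betaCheck (Θ : Fam n) (Γ : Conn n) (V : Fam n) (k : Fin n) (q : Pt n) : ℝ :=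
  (∑ r, pCov (Gp Γ V) r (Ucheck Θ Γ V) k q * V r q)
  + (∑ r, pdv r (Ucheck Θ Γ V k) q * Qp Θ Γ V r q)
  + (∑ r, pVec (Gp Γ V) k V r q * Ucheck Θ Γ V r q)
  + (∑ r, pCov (Gp Γ V) k (Qp Θ Γ V) r q * Wp V r q)
  - (∑ r, ∑ s, ∑ m, (Rp (Gp Γ V) s r m k q * V m q
      - Dp (Gp Γ V) s m r k q * Qp Θ Γ V m q) * Wp V r q * q.2 s)

/-- v-representation covector field β_k. -/
def betaV (L : Fam n) (ginv : Fin n → Fin n → Pt n → ℝ) (Γ : Conn n) (Φ : Fam n)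
    (k : Fin n) (q : Pt n) : ℝ :=
  (∑ r, q.2 r * vCov Γ r (Uv L ginv Γ Φ) k q)
  + (∑ j, Fvec Γ Φ j q * pdv j (Uv L ginv Γ Φ k) q)
  - (∑ j, ∑ r, ∑ s, vCov Γ k L j q * ginv r j q * q.2 s * vCov Γ s L r q)
  - (∑ j, ∑ r, vCov Γ k L j q * ginv r j q * Fcov L Γ Φ r q)
  + (∑ r, Lup L ginv r q * vCov Γ k (Fcov L Γ Φ) r q)
  + (∑ m, ∑ r, Lup L ginv r q * q.2 m * vCov2 Γ k (fun m' r' => vCov Γ m' L r') m r q)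
  - (∑ j, ∑ r, ∑ s, Lup L ginv r q * vCov Γ k L j q * ginv s j q * pdv s (Fcov L Γ Φ r) q)
  - (∑ j, ∑ m, ∑ r, ∑ s, Lup L ginv r q * vCov Γ k L j q * ginv s j q * q.2 m
      * pdv s (vCov Γ m L r) q)
  - (∑ r, ∑ s, ∑ m, Rv Γ s r m k q * q.2 m * Lup L ginv r q * L s q)
  + (∑ j, ∑ r, ∑ s, ∑ m, ∑ a, ginv a j q * vCov Γ k L j q * Dv Γ s m r a q * q.2 m
      * Lup L ginv r q * L s q)
  + (∑ r, ∑ s, ∑ m, ∑ a, ginv a m q * Dv Γ s r k a q * Fcov L Γ Φ m q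
      * Lup L ginv r q * L s q)

/-- v-representation covector field η_k = β_k − Σ_s U_k α^s L_s / |L|². -/
def etaV (L : Fam n) (ginv : Fin n → Fin n → Pt n → ℝ) (Γ : Conn n) (Φ : Fam n)
    (k : Fin n) (q : Pt n) : ℝ :=
  betaV L ginv Γ Φ k q
    - ∑ s, Uv L ginv Γ Φ k q * alphaV L ginv Γ Φ s q * L s q / L2 L ginv q

/-- p-representation tensor Ǎ^{rs} = ∂W^s/∂p_r. -/
def Acheck (V : Fam n) (r s : Fin n) (q : Pt n) : ℝ := pdv r (Wp V s) q

/-- v-representation tensor A^{rs} = Σ_q g^{qr} ∂L^s/∂v^q. -/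
def Av (L : Fam n) (ginv : Fin n → Fin n → Pt n → ℝ) (r s : Fin n) (q : Pt n) : ℝ :=
  ∑ j, ginv j r q * pdv j (Lup L ginv s) q

/-- p-representation tensor B̌^r_s. -/
def Bcheck (Θ : Fam n) (Γ : Conn n) (V : Fam n) (r s : Fin n) (q : Pt n) : ℝ :=
  pdv r (Ucheck Θ Γ V s) q
  + (∑ m, ∑ k, Wp V k q * q.2 m * Dp (Gp Γ V) m r k s q)
  - pVec (Gp Γ V) s (Wp V) r q
  + (∑ m, (pdv m (Wp V r) q - pdv r (Wp V m) q) * Ucheck Θ Γ V s q * q.2 m / Omga V q)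

/-- v-representation tensor B^r_s. -/
def Bv (L : Fam n) (ginv : Fin n → Fin n → Pt n → ℝ) (Γ : Conn n) (Φ : Fam n)
    (r s : Fin n) (q : Pt n) : ℝ :=
  (∑ j, ginv j r q * pdv j (Uv L ginv Γ Φ s) q)
  + (∑ m, ∑ k, ∑ j, ginv j r q * Lup L ginv k q * L m q * Dv Γ m k s j q)
  - vVec Γ s (Lup L ginv) r q
  + (∑ j, ∑ k, vCov Γ s L k q * ginv j k q * pdv j (Lup L ginv r) q)
  + (∑ j, ∑ m, (ginv j m q * pdv j (Lup L ginv r) q - ginv j r q * pdv j (Lup L ginv m) q)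
      * Uv L ginv Γ Φ s q * L m q / L2 L ginv q)

/-- p-representation tensor Č_{rs}. -/
def Ccheck (Θ : Fam n) (Γ : Conn n) (V : Fam n) (r s : Fin n) (q : Pt n) : ℝ :=
  pCov (Gp Γ V) r (Ucheck Θ Γ V) s q
  - (∑ m, (Ucheck Θ Γ V r q * pdv m (Ucheck Θ Γ V s) q
      + Ucheck Θ Γ V s q * pVec (Gp Γ V) r (Wp V) m q) * q.2 m / Omga V q)
  - (∑ k, ∑ j, ((∑ m, Dp (Gp Γ V) m j k s q * Ucheck Θ Γ V r q * q.2 m / Omga V q)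
      + Rp (Gp Γ V) j k r s q / 2) * Wp V k q * q.2 j)

/-- v-representation tensor C_{rs}. -/
def Cv (L : Fam n) (ginv : Fin n → Fin n → Pt n → ℝ) (Γ : Conn n) (Φ : Fam n)
    (r s : Fin n) (q : Pt n) : ℝ :=
  vCov Γ r (Uv L ginv Γ Φ) s q
  - (∑ j, ∑ k, vCov Γ r L j q * ginv k j q * pdv k (Uv L ginv Γ Φ s) q)
  - (∑ m, Uv L ginv Γ Φ s q * vVec Γ r (Lup L ginv) m q * L m q / L2 L ginv q)
  - (∑ j, ∑ m, Uv L ginv Γ Φ r q * ginv j m q * pdv j (Uv L ginv Γ Φ s) q * L m q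
      / L2 L ginv q)
  + (∑ m, ∑ j, ∑ k, Uv L ginv Γ Φ s q * vCov Γ r L k q * ginv j k q
      * pdv j (Lup L ginv m) q * L m q / L2 L ginv q)
  - (∑ k, ∑ j, ∑ m, ∑ a, ginv a j q * Dv Γ m k s a q * Uv L ginv Γ Φ r q * L m q
      * Lup L ginv k q * L j q / L2 L ginv q)
  - (∑ k, ∑ j, (Rv Γ j k r s q / 2) * Lup L ginv k q * L j q)
  - (∑ k, ∑ j, ∑ m, ∑ a, vCov Γ r L m q * Dv Γ j k s a q * ginv a m q
      * Lup L ginv k q * L j q)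

/-- Gauge-transformed connection Γ' = Γ + T. -/
def addT (Γ T : Conn n) : Conn n := fun k i j q => Γ k i j q + T k i j q

/-- The quantity Ξ_{rs} appearing in the gauge transformation rule for C. -/
def XiG (L : Fam n) (ginv : Fin n → Fin n → Pt n → ℝ) (Γ : Conn n) (Φ : Fam n)
    (T : Conn n) (r s : Fin n) (q : Pt n) : ℝ :=
  (∑ j, ∑ b, ∑ m, T b r j q * L b q * Pv L ginv j m q * Bv L ginv Γ Φ m s q)
  + (∑ j, ∑ b, ∑ m, ∑ a, ∑ c, ∑ e, T b r j q * L b q * Pv L ginv j m q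
      * Av L ginv m a q * Pv L ginv c a q * T e s c q * L e q)

end

theorem fderiv_pt_apply {n : ℕ} (f : Pt n → ℝ) (z : Pt n) (u y : Fin n → ℝ) :
    fderiv ℝ f z (u, y) = (∑ m, u m * pdx m f z) + ∑ k, y k * pdv k f z := by
  have hu : ((u, y) : Pt n)
      = (∑ m, u m • (((Pi.single m 1 : Fin n → ℝ), (0 : Fin n → ℝ)) : Pt n))
        + ∑ k, y k • (((0 : Fin n → ℝ), (Pi.single k 1 : Fin n → ℝ)) : Pt n) := by
    apply Prod.ext
    · simp only [Prod.fst_add, Prod.fst_sum, Prod.smul_fst, smul_zero]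
      ext j
      simp [Pi.single_apply]
    · simp only [Prod.snd_add, Prod.snd_sum, Prod.smul_snd, smul_zero]
      ext j
      simp [Pi.single_apply]
  rw [hu, map_add, map_sum, map_sum]
  congr 1 <;>
  · refine Finset.sum_congr rfl fun m _ => ?_
    rw [map_smul]
    simp [pdx, pdv, smul_eq_mul]

theorem chain_eval {n : ℕ} (L V : Fam n)
    (hL : ∀ i, ContDiff ℝ (⊤ : ℕ∞) (L i)) (hV : ∀ i, ContDiff ℝ (⊤ : ℕ∞) (V i))
    (hLeft : ∀ q : Pt n, lamInv V (lam L q) = q)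
    (s : Fin n) (q : Pt n) (u w : Fin n → ℝ) :
    fderiv ℝ (V s) (lam L q) (u, fun k => fderiv ℝ (L k) q (u, w)) = w s := by
  have hlamd : HasFDerivAt (lam L)
      ((ContinuousLinearMap.fst ℝ (Fin n → ℝ) (Fin n → ℝ)).prod
        (ContinuousLinearMap.pi fun k => fderiv ℝ (L k) q)) q := by
    refine HasFDerivAt.prodMk hasFDerivAt_fst ?_
    exact hasFDerivAt_pi.mpr fun k => (((hL k).differentiable (by simp)) q).hasFDerivAt
  have hcomp := ((((hV s).differentiable (by simp)) (lam L q)).hasFDerivAt).comp q hlamd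
  have heq : (fun z : Pt n => V s (lam L z)) = fun z : Pt n => z.2 s := by
    funext z
    have h := congrArg (fun t : Pt n => t.2 s) (hLeft z)
    simpa [lamInv] using h
  simp only [Function.comp_def] at hcomp
  rw [heq] at hcomp
  have h2 : HasFDerivAt (fun z : Pt n => z.2 s)
      ((ContinuousLinearMap.proj s).comp (ContinuousLinearMap.snd ℝ (Fin n → ℝ) (Fin n → ℝ))) q :=
    ((ContinuousLinearMap.proj s).comp (ContinuousLinearMap.snd ℝ (Fin n → ℝ) (Fin n → ℝ))).hasFDerivAt
  have huniq := hcomp.unique h2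
  have h3 := congrFun (congrArg (fun T : Pt n →L[ℝ] ℝ => (T : Pt n → ℝ)) huniq) (u, w)
  simpa using h3

theorem pdv_V {n : ℕ} (L V : Fam n) (ginv : Fin n → Fin n → Pt n → ℝ)
    (hL : ∀ i, ContDiff ℝ (⊤ : ℕ∞) (L i)) (hV : ∀ i, ContDiff ℝ (⊤ : ℕ∞) (V i))
    (hLeft : ∀ q : Pt n, lamInv V (lam L q) = q)
    (hginv : ∀ (q : Pt n) (s k : Fin n), (∑ r, ginv s r q * gdn L r k q) = kron s k)
    (q : Pt n) (s k : Fin n) : pdv k (V s) (lam L q) = ginv s k q := by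
  have key : ∀ s b : Fin n, (∑ k, pdv k (V s) (lam L q) * gdn L k b q) = kron s b := by
    intro s b
    have h := chain_eval L V hL hV hLeft s q 0 (Pi.single b 1)
    rw [fderiv_pt_apply] at h
    simp only [Pi.zero_apply, zero_mul, Finset.sum_const_zero, zero_add] at h
    have h2 : ∀ k : Fin n, fderiv ℝ (L k) q ((0 : Fin n → ℝ), Pi.single b 1) = gdn L k b q :=
      fun k => rfl
    rw [Finset.sum_congr rfl fun k _ => by rw [h2 k]] at h
    rw [show (∑ k, pdv k (V s) (lam L q) * gdn L k b q)
        = ∑ k, gdn L k b q * pdv k (V s) (lam L q) from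
      Finset.sum_congr rfl fun k _ => mul_comm _ _]
    rw [h, Pi.single_apply, kron]
  let A : Matrix (Fin n) (Fin n) ℝ := Matrix.of fun s k => pdv k (V s) (lam L q)
  let G : Matrix (Fin n) (Fin n) ℝ := Matrix.of fun r k => gdn L r k q
  let Gi : Matrix (Fin n) (Fin n) ℝ := Matrix.of fun s r => ginv s r q
  have hAG : A * G = 1 := by
    ext s b
    rw [Matrix.mul_apply]
    simpa [A, G, Matrix.one_apply, kron] using key s b
  have hGiG : Gi * G = 1 := by
    ext s b
    rw [Matrix.mul_apply]
    simpa [Gi, G, Matrix.one_apply, kron] using hginv q s b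
  have hfin : A = Gi := by
    calc A = A * (G * Gi) := by rw [mul_eq_one_comm.mp hGiG, mul_one]
    _ = (A * G) * Gi := by rw [mul_assoc]
    _ = Gi := by rw [hAG, one_mul]
  exact congrFun (congrFun hfin s) k

theorem pdx_V {n : ℕ} (L V : Fam n) (ginv : Fin n → Fin n → Pt n → ℝ)
    (hL : ∀ i, ContDiff ℝ (⊤ : ℕ∞) (L i)) (hV : ∀ i, ContDiff ℝ (⊤ : ℕ∞) (V i))
    (hLeft : ∀ q : Pt n, lamInv V (lam L q) = q)
    (hginv : ∀ (q : Pt n) (s k : Fin n), (∑ r, ginv s r q * gdn L r k q) = kron s k)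
    (q : Pt n) (s m : Fin n) :
    pdx m (V s) (lam L q) = -∑ k, ginv s k q * pdx m (L k) q := by
  have h := chain_eval L V hL hV hLeft s q (Pi.single m 1) 0
  rw [fderiv_pt_apply] at h
  have h2 : ∀ k : Fin n, fderiv ℝ (L k) q ((Pi.single m 1 : Fin n → ℝ), (0 : Fin n → ℝ))
      = pdx m (L k) q := fun k => rfl
  simp only [h2, Pi.zero_apply, Pi.single_apply, ite_mul, one_mul, zero_mul,
    Finset.sum_ite_eq', Finset.mem_univ, if_true,
    pdv_V L V ginv hL hV hLeft hginv q] at h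
  have : pdx m (V s) (lam L q) + ∑ k, pdx m (L k) q * ginv s k q = 0 := h
  rw [show (∑ k, ginv s k q * pdx m (L k) q) = ∑ k, pdx m (L k) q * ginv s k q from
    Finset.sum_congr rfl fun k _ => mul_comm _ _]
  linarith

theorem sum_identity (n : ℕ) (a Lv Ph : Fin n → ℝ)
    (P g gi : Fin n → Fin n → ℝ)
    (G : Fin n → Fin n → Fin n → ℝ) (i : Fin n)
    (hgi : ∀ s k, (∑ r, gi s r * g r k) = if s = k then (1:ℝ) else 0) :
    ((∑ s, P s i * a s) + (∑ s, g i s * Ph s))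
    - (∑ j, ∑ k, G k i j * a j * Lv k)
    + (∑ s, ((-∑ k, gi s k * P i k) + (∑ c, ∑ b, Lv c * G c i b * gi s b)
        + (∑ c, G s i c * a c)) * Lv s)
    =
    (∑ j, a j * ((P j i - ∑ c, ∑ b, a c * G b c j * g i b) - ∑ b, G b j i * Lv b))
    - (∑ j, (∑ r, Lv r * gi r j) * ((P i j - ∑ c, ∑ b, a c * G b c i * g j b)
        - ∑ b, G b i j * Lv b))
    + (∑ j, g i j * (Ph j + ∑ c, ∑ k, G j c k * a c * a k)) := by
  -- contraction: Σ_j Lup j * g j b = Lv b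
  have key : ∀ b, (∑ j, (∑ r, Lv r * gi r j) * g j b) = Lv b := by
    intro b
    calc (∑ j, (∑ r, Lv r * gi r j) * g j b)
        = ∑ j, ∑ r, Lv r * (gi r j * g j b) := by
          refine Finset.sum_congr rfl fun j _ => ?_
          rw [Finset.sum_mul]; exact Finset.sum_congr rfl fun r _ => by ring
      _ = ∑ r, Lv r * ∑ j, gi r j * g j b := by
          rw [Finset.sum_comm]
          exact Finset.sum_congr rfl fun r _ => (Finset.mul_sum _ _ _).symm
      _ = ∑ r, Lv r * (if r = b then 1 else 0) := by
          exact Finset.sum_congr rfl fun r _ => by rw [hgi]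
      _ = Lv b := by simp [mul_ite]
  -- split LHS third sum
  have hsplit : (∑ s, ((-∑ k, gi s k * P i k) + (∑ c, ∑ b, Lv c * G c i b * gi s b)
        + (∑ c, G s i c * a c)) * Lv s)
      = -(∑ s, (∑ k, gi s k * P i k) * Lv s)
        + (∑ s, (∑ c, ∑ b, Lv c * G c i b * gi s b) * Lv s)
        + (∑ s, (∑ c, G s i c * a c) * Lv s) := by
    simp only [add_mul, neg_mul, Finset.sum_add_distrib, Finset.sum_neg_distrib]
  -- split RHS
  have hsplitR1 : (∑ j, a j * ((P j i - ∑ c, ∑ b, a c * G b c j * g i b) - ∑ b, G b j i * Lv b))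
      = (∑ j, a j * P j i) - (∑ j, a j * ∑ c, ∑ b, a c * G b c j * g i b)
        - (∑ j, a j * ∑ b, G b j i * Lv b) := by
    simp only [mul_sub, Finset.sum_sub_distrib]
  have hsplitR2 : (∑ j, (∑ r, Lv r * gi r j) * ((P i j - ∑ c, ∑ b, a c * G b c i * g j b)
        - ∑ b, G b i j * Lv b))
      = (∑ j, (∑ r, Lv r * gi r j) * P i j)
        - (∑ j, (∑ r, Lv r * gi r j) * ∑ c, ∑ b, a c * G b c i * g j b)
        - (∑ j, (∑ r, Lv r * gi r j) * ∑ b, G b i j * Lv b) := by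
    simp only [mul_sub, Finset.sum_sub_distrib]
  have hsplitR3 : (∑ j, g i j * (Ph j + ∑ c, ∑ k, G j c k * a c * a k))
      = (∑ j, g i j * Ph j) + (∑ j, g i j * ∑ c, ∑ k, G j c k * a c * a k) := by
    simp only [mul_add, Finset.sum_add_distrib]
  rw [hsplit, hsplitR1, hsplitR2, hsplitR3]
  -- matching equalities
  have e1 : (∑ j, ∑ k, G k i j * a j * Lv k) = (∑ s, (∑ c, G s i c * a c) * Lv s) := by
    rw [Finset.sum_comm]
    refine Finset.sum_congr rfl fun s _ => ?_
    rw [Finset.sum_mul]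
  have e2 : (∑ s, (∑ k, gi s k * P i k) * Lv s) = (∑ j, (∑ r, Lv r * gi r j) * P i j) := by
    calc (∑ s, (∑ k, gi s k * P i k) * Lv s)
        = ∑ s, ∑ k, Lv s * gi s k * P i k := by
          refine Finset.sum_congr rfl fun s _ => ?_
          rw [Finset.sum_mul]; exact Finset.sum_congr rfl fun k _ => by ring
      _ = ∑ k, ∑ s, Lv s * gi s k * P i k := Finset.sum_comm
      _ = ∑ j, (∑ r, Lv r * gi r j) * P i j := by
          refine Finset.sum_congr rfl fun j _ => ?_
          rw [Finset.sum_mul]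
  have e3 : (∑ s, (∑ c, ∑ b, Lv c * G c i b * gi s b) * Lv s)
      = (∑ j, (∑ r, Lv r * gi r j) * ∑ b, G b i j * Lv b) := by
    calc (∑ s, (∑ c, ∑ b, Lv c * G c i b * gi s b) * Lv s)
        = ∑ s, ∑ b, ∑ c, (Lv s * gi s b) * (G c i b * Lv c) := by
          refine Finset.sum_congr rfl fun s _ => ?_
          rw [Finset.sum_mul, Finset.sum_comm]
          exact Finset.sum_congr rfl fun b _ => by
            rw [Finset.sum_mul]; exact Finset.sum_congr rfl fun c _ => by ring
      _ = ∑ b, ∑ s, ∑ c, (Lv s * gi s b) * (G c i b * Lv c) := Finset.sum_comm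
      _ = ∑ j, (∑ r, Lv r * gi r j) * ∑ b, G b i j * Lv b := by
          refine Finset.sum_congr rfl fun j _ => ?_
          rw [Finset.sum_mul_sum]
  have e4 : (∑ j, (∑ r, Lv r * gi r j) * ∑ c, ∑ b, a c * G b c i * g j b)
      = (∑ j, a j * ∑ b, G b j i * Lv b) := by
    calc (∑ j, (∑ r, Lv r * gi r j) * ∑ c, ∑ b, a c * G b c i * g j b)
        = ∑ j, ∑ c, ∑ b, a c * G b c i * ((∑ r, Lv r * gi r j) * g j b) := by
          refine Finset.sum_congr rfl fun j _ => ?_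
          rw [Finset.mul_sum]
          refine Finset.sum_congr rfl fun c _ => ?_
          rw [Finset.mul_sum]; exact Finset.sum_congr rfl fun b _ => by ring
      _ = ∑ c, ∑ b, a c * G b c i * ∑ j, (∑ r, Lv r * gi r j) * g j b := by
          rw [Finset.sum_comm]
          refine Finset.sum_congr rfl fun c _ => ?_
          rw [Finset.sum_comm]
          exact Finset.sum_congr rfl fun b _ => (Finset.mul_sum _ _ _).symm
      _ = ∑ c, ∑ b, a c * G b c i * Lv b := by
          exact Finset.sum_congr rfl fun c _ => Finset.sum_congr rfl fun b _ => by rw [key]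
      _ = ∑ j, a j * ∑ b, G b j i * Lv b := by
          refine Finset.sum_congr rfl fun j _ => ?_
          rw [Finset.mul_sum]; exact Finset.sum_congr rfl fun b _ => by ring
  have e5 : (∑ j, g i j * ∑ c, ∑ k, G j c k * a c * a k)
      = (∑ j, a j * ∑ c, ∑ b, a c * G b c j * g i b) := by
    calc (∑ j, g i j * ∑ c, ∑ k, G j c k * a c * a k)
        = ∑ j, ∑ c, ∑ k, a k * (a c * G j c k * g i j) := by
          refine Finset.sum_congr rfl fun j _ => ?_
          rw [Finset.mul_sum]
          refine Finset.sum_congr rfl fun c _ => ?_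
          rw [Finset.mul_sum]; exact Finset.sum_congr rfl fun k _ => by ring
      _ = ∑ k, ∑ c, ∑ j, a k * (a c * G j c k * g i j) := by
          rw [show (∑ j, ∑ c, ∑ k, a k * (a c * G j c k * g i j))
              = ∑ j, ∑ k, ∑ c, a k * (a c * G j c k * g i j) from
            Finset.sum_congr rfl fun j _ => Finset.sum_comm]
          rw [Finset.sum_comm]
          exact Finset.sum_congr rfl fun k _ => Finset.sum_comm
      _ = ∑ j, a j * ∑ c, ∑ b, a c * G b c j * g i b := by
          refine Finset.sum_congr rfl fun k _ => ?_
          rw [Finset.mul_sum]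
          refine Finset.sum_congr rfl fun c _ => ?_
          rw [Finset.mul_sum]
  have e6 : (∑ s, P s i * a s) = (∑ j, a j * P j i) :=
    Finset.sum_congr rfl fun s _ => by ring
  rw [e1, e2, e3, e4, e5, e6]
  ring


theorem stmt4
    (n : ℕ) (hn : 2 ≤ n)
    (L V : Fam n) (ginv : Fin n → Fin n → Pt n → ℝ)
    (hL : ∀ i, ContDiff ℝ (⊤ : ℕ∞) (L i))
    (hV : ∀ i, ContDiff ℝ (⊤ : ℕ∞) (V i))
    (hginvSm : ∀ i j, ContDiff ℝ (⊤ : ℕ∞) (ginv i j))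
    (hLeft : ∀ q : Pt n, lamInv V (lam L q) = q)
    (hRight : ∀ q : Pt n, lam L (lamInv V q) = q)
    (hginv : ∀ (q : Pt n) (s k : Fin n), (∑ r, ginv s r q * gdn L r k q) = kron s k)
    (Γ : Conn n)
    (hΓ : ∀ k i j, ContDiff ℝ (⊤ : ℕ∞) (Γ k i j))
    (hΓsym : ∀ (k i j : Fin n) (q : Pt n), Γ k i j q = Γ k j i q)
    (Φ : Fam n) (hΦ : ∀ i, ContDiff ℝ (⊤ : ℕ∞) (Φ i))
    (Θ : Fam n) (hΘ : ∀ i, ContDiff ℝ (⊤ : ℕ∞) (Θ i))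
    (hΘdef : ∀ (q : Pt n) (i : Fin n),
      Θ i (lam L q) = (∑ s, pdx s (L i) q * q.2 s) + (∑ s, pdv s (L i) q * Φ s q)) :
    ∀ (q : Pt n) (i : Fin n),
      Ucheck Θ Γ V i (lam L q) = Uv L ginv Γ Φ i q := by
  intro q i
  have hVval : ∀ j, V j (lam L q) = q.2 j := fun j => by
    have h := congrArg (fun t : Pt n => t.2 j) (hLeft q)
    simpa [lamInv] using h
  have hG : ∀ k a b, Gp Γ V k a b (lam L q) = Γ k a b q := fun k a b => by
    simp [Gp, hLeft q]
  have hpdv := pdv_V L V ginv hL hV hLeft hginv q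
  have hpdx := pdx_V L V ginv hL hV hLeft hginv q
  have hsnd : ∀ s, (lam L q).2 s = L s q := fun _ => rfl
  have hgi' : ∀ s k, (∑ r, ginv s r q * pdv k (L r) q) = if s = k then (1:ℝ) else 0 :=
    fun s k => by simpa [kron, gdn] using hginv q s k
  have main := sum_identity n q.2 (fun s => L s q) (fun s => Φ s q)
      (fun m k => pdx m (L k) q) (fun r k => pdv k (L r) q) (fun s r => ginv s r q)
      (fun k a b => Γ k a b q) i hgi'
  simp only [Ucheck, Qp, pVec, pS, Uv, vCov, vS, Fcov, Fvec, Lup, gdn,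
    hΘdef q i, hG, hVval, hpdv, hpdx, hsnd]
  exact main
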